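/- Let E be a finite-dimensional real inner product space, Q : Matrix (Fin m) (Fin n) ℝ, and let f : (Fin n → E) → ℝ be convex. For X : Fin n → E write (QX)_i = Σ_j Q i j • X_j. Suppose λ : Fin m → E satisfies ‖λ_i‖ ≤ 1 for all i, and X* : Fin n → E satisfies: (i) X* minimizes the Lagrangian X ↦ f(X) + Σ_i ⟪λ_i, (QX)_i⟫ over all X; and (ii) ⟪λ_i, (QX*)_i⟫ = ‖(QX*)_i‖ for every i. Then X* minimizes the triangle lasso objective F(X) = f(X) + Σ_i ‖(QX)_i‖ over all X : Fin n → E. -/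

import Mathlib

open scoped InnerProductSpace

theorem triangle_lasso_dual_recovery
    {E : Type*} [NormedAddCommGroup E] [InnerProductSpace ℝ E] [FiniteDimensional ℝ E]
    {m n : ℕ} (Q : Matrix (Fin m) (Fin n) ℝ) (f : (Fin n → E) → ℝ)
    (hf : ConvexOn ℝ Set.univ f)
    (lam : Fin m → E) (hlam : ∀ i : Fin m, ‖lam i‖ ≤ 1)
    (Xs : Fin n → E)
    (hmin : ∀ X : Fin n → E,
      f Xs + ∑ i, ⟪lam i, ∑ j, Q i j • Xs j⟫_ℝ ≤
        f X + ∑ i, ⟪lam i, ∑ j, Q i j • X j⟫_ℝ)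
    (hcomp : ∀ i : Fin m, ⟪lam i, ∑ j, Q i j • Xs j⟫_ℝ = ‖∑ j, Q i j • Xs j‖) :
    ∀ X : Fin n → E,
      f Xs + ∑ i, ‖∑ j, Q i j • Xs j‖ ≤ f X + ∑ i, ‖∑ j, Q i j • X j‖ := by
  intro X
  have h1 : f Xs + ∑ i, ‖∑ j, Q i j • Xs j‖ =
      f Xs + ∑ i, ⟪lam i, ∑ j, Q i j • Xs j⟫_ℝ := by
    simp [hcomp]
  rw [h1]
  refine (hmin X).trans (add_le_add_right ?_ _)
  refine Finset.sum_le_sum fun i _ => ?_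
  calc ⟪lam i, ∑ j, Q i j • X j⟫_ℝ ≤ ‖lam i‖ * ‖∑ j, Q i j • X j‖ :=
        real_inner_le_norm _ _
    _ ≤ 1 * ‖∑ j, Q i j • X j‖ := by
        exact mul_le_mul_of_nonneg_right (hlam i) (norm_nonneg _)
    _ = _ := one_mul _
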